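/- Summability for iBPDCA with (SC1) (Proposition 3.1(iii)-(iv)). In the iBPDCA setting with stopping criterion (SC1), if F is bounded below with ζ := lim_{k→∞} F(x^k), then Σ_{k=0}^∞ D_φ(x^{k+1}, x^k) ≤ (F(x^0) − ζ)/((1−σ)γ_min − L) < ∞ and Σ_{k=0}^∞ D_φ(x^k, x^{k+1}) ≤ (F(x^0) − ζ)/γ_min < ∞; consequently D_φ(x^{k+1}, x^k) → 0 and D_φ(x^k, x^{k+1}) → 0. Moreover Σ_{k=0}^∞ (‖Δ^k‖² + |⟨Δ^k, x^{k+1} − x^k⟩| + δ_k) ≤ σγ_max Σ_{k=0}^∞ D_φ(x^{k+1}, x^k) < ∞, hence ‖Δ^k‖ → 0, |⟨Δ^k, x^{k+1} − x^k⟩| → 0 and δ_k → 0. -/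

import Mathlib

open Filter Topology Bornology RealInnerProductSpace
open scoped Classical

noncomputable section

/-- `ℝⁿ` with the Euclidean inner product. -/
abbrev E (n : ℕ) := EuclideanSpace ℝ (Fin n)

/-- Bregman distance `D_φ(x, y) = φ(x) − φ(y) − ⟨∇φ(y), x − y⟩` associated with the
kernel `φ` whose gradient is `φ'`. -/
def breg {n : ℕ} (φ : E n → ℝ) (φ' : E n → E n) (x y : E n) : ℝ :=
  φ x - φ y - ⟪φ' y, x - y⟫

/-- `ε`-subdifferential at `x` of the extended-real-valued convex function that is equal
to `h` on its domain `S` and `+∞` outside `S`: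
`∂_ε h(x) = {d : h(y) ≥ h(x) + ⟨d, y − x⟩ − ε for all y}` (the inequality being automatic
for `y ∉ S`). -/
def epsSubdiff {n : ℕ} (S : Set (E n)) (h : E n → ℝ) (ε : ℝ) (x : E n) : Set (E n) :=
  {d | ∀ y ∈ S, h x + ⟪d, y - x⟫ - ε ≤ h y}

/-- Gradient inequality for a convex function at a point where it has a gradient. -/
lemma grad_ineq_aux {n : ℕ} {U : Set (E n)} {φ : E n → ℝ} {g : E n}
    {x y : E n} (hx : x ∈ U) (hy : y ∈ U) (hconv : ConvexOn ℝ U φ)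
    (hg : HasGradientAt φ g y) : φ y + ⟪g, x - y⟫ ≤ φ x := by
  have hline : HasDerivAt (fun t : ℝ => y + t • (x - y)) (x - y) (0 : ℝ) := by
    simpa using ((hasDerivAt_id (0:ℝ)).smul_const (x - y)).const_add y
  have hfd : HasFDerivAt φ ((InnerProductSpace.toDual ℝ (E n)) g) ((0:ℝ) • (x - y) + y) := by
    simpa using hg.hasFDerivAt
  have hcomp : HasDerivAt (fun t : ℝ => φ (y + t • (x - y))) ⟪g, x - y⟫ 0 := by
    have h := hfd.comp_hasDerivAt 0 (by simpa [add_comm] using hline :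
      HasDerivAt (fun t : ℝ => t • (x - y) + y) (x - y) (0 : ℝ))
    simpa [add_comm, Function.comp_def] using h
  have hslope : Tendsto (slope (fun t : ℝ => φ (y + t • (x - y))) 0) (𝓝[>] (0:ℝ))
      (𝓝 ⟪g, x - y⟫) :=
    (hasDerivAt_iff_tendsto_slope.mp hcomp).mono_left
      (nhdsWithin_mono _ (fun t ht => ne_of_gt ht))
  have hev : ∀ᶠ t in 𝓝[>] (0:ℝ),
      slope (fun t : ℝ => φ (y + t • (x - y))) 0 t ≤ φ x - φ y := by
    filter_upwards [Ioc_mem_nhdsGT_of_mem (Set.left_mem_Ico.mpr one_pos)] with t ht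
    have hpt : (1 - t) • y + t • x = y + t • (x - y) := by
      rw [sub_smul, one_smul, smul_sub]; abel
    have h01 : φ (y + t • (x - y)) ≤ (1 - t) * φ y + t * φ x := by
      have h := hconv.2 hy hx (by linarith [ht.2, ht.1] : (0:ℝ) ≤ 1 - t) (le_of_lt ht.1)
        (by ring)
      rw [hpt] at h
      simpa using h
    have ht0 : (0:ℝ) < t := ht.1
    rw [slope_def_field]
    simp only [sub_zero]
    rw [div_le_iff₀ ht0]
    simp only [zero_smul, add_zero]
    nlinarith
  have := le_of_tendsto hslope hev
  linarith

/-- **Proposition 3.1(iii)-(iv).** Summability for iBPDCA with (SC1). -/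
theorem ibpdca_sc1_summable
    {n : ℕ} (S U X : Set (E n)) (P₁ P₂ f φ : E n → ℝ)
    (f' φ' : E n → E n) (L γmin γmax σ : ℝ)
    (x : ℕ → E n) (γ δ : ℕ → ℝ) (ξ d Δ : ℕ → E n)
    -- `P₁` is proper, lower semicontinuous and convex (domain `S`, real values `P₁` on `S`)
    (hSne : S.Nonempty)
    (hP₁conv : ConvexOn ℝ S P₁)
    (hP₁lsc : LowerSemicontinuous (fun y => if y ∈ S then (P₁ y : EReal) else (⊤ : EReal)))
    -- `P₂` is convex and continuous
    (hP₂conv : ConvexOn ℝ Set.univ P₂) (hP₂cont : Continuous P₂)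
    -- `f` and `φ` are differentiable on the open convex set `U`, `φ` strictly convex on `U`
    (hUopen : IsOpen U) (hUconv : Convex ℝ U)
    (hfdiff : ∀ u ∈ U, HasGradientAt f (f' u) u)
    (hφdiff : ∀ u ∈ U, HasGradientAt φ (φ' u) u)
    (hφsc : StrictConvexOn ℝ U φ)
    -- `(f, φ)` is `L`-smooth adaptable restricted on `X`
    (hL : 0 ≤ L)
    (hsmad : ∀ u ∈ X, ∀ v ∈ X, |f v - f u - ⟪f' u, v - u⟫| ≤ L * breg φ φ' v u)
    -- the iterates and the inexact optimality condition
    (hxmem : ∀ k, x k ∈ S ∩ U ∩ X)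
    (hLγ : L < γmin) (hγ : ∀ k, γmin ≤ γ k ∧ γ k ≤ γmax)
    (hδpos : ∀ k, 0 ≤ δ k)
    (hξ : ∀ k, ξ k ∈ epsSubdiff Set.univ P₂ 0 (x k))
    (hd : ∀ k, d (k + 1) ∈ epsSubdiff S P₁ (δ k) (x (k + 1)))
    (hΔ : ∀ k, Δ k = d (k + 1) + f' (x k) - ξ k + γ k • (φ' (x (k + 1)) - φ' (x k)))
    -- the stopping criterion
    (hσ0 : 0 ≤ σ) (hσ : σ < (γmin - L) / γmin)
    (hSC1 : ∀ k, ‖Δ k‖ ^ 2 + |⟪Δ k, x (k + 1) - x k⟫| + δ k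
        ≤ σ * γ k * breg φ φ' (x (k + 1)) (x k))
    -- `F` is bounded below, and `ζ` is the limit of `F(x^k)`
    (hFbdd : ∃ mlo : ℝ, ∀ y ∈ S, mlo ≤ P₁ y - P₂ y + f y)
    (ζ : ℝ) (hζ : Tendsto (fun k => P₁ (x k) - P₂ (x k) + f (x k)) atTop (𝓝 ζ)) :
    (Summable (fun k => breg φ φ' (x (k + 1)) (x k))
      ∧ ∑' k, breg φ φ' (x (k + 1)) (x k)
          ≤ ((P₁ (x 0) - P₂ (x 0) + f (x 0)) - ζ) / ((1 - σ) * γmin - L))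
    ∧ (Summable (fun k => breg φ φ' (x k) (x (k + 1)))
      ∧ ∑' k, breg φ φ' (x k) (x (k + 1))
          ≤ ((P₁ (x 0) - P₂ (x 0) + f (x 0)) - ζ) / γmin)
    ∧ Tendsto (fun k => breg φ φ' (x (k + 1)) (x k)) atTop (𝓝 0)
    ∧ Tendsto (fun k => breg φ φ' (x k) (x (k + 1))) atTop (𝓝 0)
    ∧ (Summable (fun k => ‖Δ k‖ ^ 2 + |⟪Δ k, x (k + 1) - x k⟫| + δ k)
      ∧ ∑' k, (‖Δ k‖ ^ 2 + |⟪Δ k, x (k + 1) - x k⟫| + δ k)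
          ≤ σ * γmax * ∑' k, breg φ φ' (x (k + 1)) (x k))
    ∧ Tendsto (fun k => ‖Δ k‖) atTop (𝓝 0)
    ∧ Tendsto (fun k => |⟪Δ k, x (k + 1) - x k⟫|) atTop (𝓝 0)
    ∧ Tendsto δ atTop (𝓝 0) := by
  -- Abbreviations
  set F : ℕ → ℝ := fun k => P₁ (x k) - P₂ (x k) + f (x k) with hF
  set Dp : ℕ → ℝ := fun k => breg φ φ' (x (k + 1)) (x k) with hDp
  set Dm : ℕ → ℝ := fun k => breg φ φ' (x k) (x (k + 1))  with hDm
  have hmemU : ∀ k, x k ∈ U := fun k => (hxmem k).1.2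
  have hmemS : ∀ k, x k ∈ S := fun k => (hxmem k).1.1
  have hmemX : ∀ k, x k ∈ X := fun k => (hxmem k).2
  have hγminpos : (0:ℝ) < γmin := lt_of_le_of_lt hL hLγ
  have hσ1 : σ < 1 := lt_of_lt_of_le hσ (by rw [div_le_one hγminpos]; linarith)
  have hc1pos : (0:ℝ) < (1 - σ) * γmin - L := by
    have := (lt_div_iff₀ hγminpos).mp hσ
    nlinarith
  set c₁ : ℝ := (1 - σ) * γmin - L with hc₁
  -- Bregman distances between iterates are nonnegative
  have hDp0 : ∀ k, 0 ≤ Dp k := by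
    intro k
    have := grad_ineq_aux (hmemU (k+1)) (hmemU k) hφsc.convexOn (hφdiff _ (hmemU k))
    simp only [hDp, breg]; linarith
  have hDm0 : ∀ k, 0 ≤ Dm k := by
    intro k
    have := grad_ineq_aux (hmemU k) (hmemU (k+1)) hφsc.convexOn (hφdiff _ (hmemU (k+1)))
    simp only [hDm, breg]; linarith
  -- Key sufficient-decrease inequality
  have hkey : ∀ k, c₁ * Dp k + γmin * Dm k ≤ F k - F (k + 1) := by
    intro k
    set v : E n := x (k + 1) - x k with hv
    have h1 : P₁ (x (k+1)) + ⟪d (k+1), x k - x (k+1)⟫ - δ k ≤ P₁ (x k) :=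
      hd k (x k) (hmemS k)
    have h1' : P₁ (x (k+1)) - ⟪d (k+1), v⟫ - δ k ≤ P₁ (x k) := by
      have : ⟪d (k+1), x k - x (k+1)⟫ = -⟪d (k+1), v⟫ := by
        rw [hv, inner_sub_right, inner_sub_right]; ring
      linarith [h1, this.symm.trans_le (le_of_eq rfl)] <;> linarith
    have h2 : P₂ (x k) + ⟪ξ k, v⟫ - 0 ≤ P₂ (x (k+1)) :=
      hξ k (x (k+1)) (Set.mem_univ _)
    have h3 : f (x (k+1)) - f (x k) - ⟪f' (x k), v⟫ ≤ L * Dp k :=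
      (abs_le.mp (hsmad (x k) (hmemX k) (x (k+1)) (hmemX (k+1)))).2
    have hid : ⟪φ' (x (k+1)) - φ' (x k), v⟫ = Dp k + Dm k := by
      simp only [hDp, hDm, breg, hv, inner_sub_left, inner_sub_right]; ring
    have h5 : ⟪Δ k, v⟫ = ⟪d (k+1), v⟫ + ⟪f' (x k), v⟫ - ⟪ξ k, v⟫
        + γ k * (Dp k + Dm k) := by
      rw [hΔ k, inner_add_left, inner_sub_left, inner_add_left, real_inner_smul_left, hid]
    have h4 : ⟪Δ k, v⟫ + δ k ≤ σ * γ k * Dp k := by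
      have ha : ⟪Δ k, v⟫ ≤ |⟪Δ k, v⟫| := le_abs_self _
      have hb := hSC1 k
      have hn : (0:ℝ) ≤ ‖Δ k‖ ^ 2 := sq_nonneg _
      simp only [hDp] at hb ⊢
      linarith
    have e1 : c₁ * Dp k ≤ ((1 - σ) * γ k - L) * Dp k := by
      apply mul_le_mul_of_nonneg_right _ (hDp0 k)
      have h := (hγ k).1
      nlinarith
    have e2 : γmin * Dm k ≤ γ k * Dm k :=
      mul_le_mul_of_nonneg_right (hγ k).1 (hDm0 k)
    have hFk : F (k+1) ≤ F k - (((1 - σ) * γ k - L) * Dp k + γ k * Dm k) := by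
      simp only [hF]
      nlinarith [h1', h2, h3, h4, h5]
    simp only [hF] at hFk ⊢
    linarith
  -- F is antitone and bounded below by ζ
  have hFanti : Antitone F := by
    apply antitone_nat_of_succ_le
    intro k
    have := hkey k
    nlinarith [hDp0 k, hDm0 k, mul_nonneg (le_of_lt hc1pos) (hDp0 k),
      mul_nonneg (le_of_lt hγminpos) (hDm0 k)]
  have hζle : ∀ N, ζ ≤ F N := fun N => hFanti.le_of_tendsto hζ N
  -- partial-sum bound
  have hsum : ∀ N, ∑ k ∈ Finset.range N, (c₁ * Dp k + γmin * Dm k) ≤ F 0 - ζ := by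
    intro N
    have htel : ∑ k ∈ Finset.range N, (F k - F (k+1)) = F 0 - F N :=
      Finset.sum_range_sub' F N
    have hle : ∑ k ∈ Finset.range N, (c₁ * Dp k + γmin * Dm k)
        ≤ ∑ k ∈ Finset.range N, (F k - F (k+1)) :=
      Finset.sum_le_sum (fun k _ => hkey k)
    have := hζle N
    linarith
  have hsum1 : ∀ N, ∑ k ∈ Finset.range N, c₁ * Dp k ≤ F 0 - ζ := by
    intro N
    have h := hsum N
    have : ∑ k ∈ Finset.range N, c₁ * Dp k ≤ ∑ k ∈ Finset.range N, (c₁ * Dp k + γmin * Dm k) :=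
      Finset.sum_le_sum (fun k _ => by nlinarith [hDm0 k, mul_nonneg (le_of_lt hγminpos) (hDm0 k)])
    linarith
  have hsum2 : ∀ N, ∑ k ∈ Finset.range N, γmin * Dm k ≤ F 0 - ζ := by
    intro N
    have h := hsum N
    have : ∑ k ∈ Finset.range N, γmin * Dm k ≤ ∑ k ∈ Finset.range N, (c₁ * Dp k + γmin * Dm k) :=
      Finset.sum_le_sum (fun k _ => by nlinarith [hDp0 k, mul_nonneg (le_of_lt hc1pos) (hDp0 k)])
    linarith
  have hSp' : Summable (fun k => c₁ * Dp k) :=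
    summable_of_sum_range_le (fun k => mul_nonneg (le_of_lt hc1pos) (hDp0 k)) hsum1
  have hSm' : Summable (fun k => γmin * Dm k) :=
    summable_of_sum_range_le (fun k => mul_nonneg (le_of_lt hγminpos) (hDm0 k)) hsum2
  have hSp : Summable Dp := by
    have := hSp'.mul_left c₁⁻¹
    simpa [← mul_assoc, inv_mul_cancel₀ (ne_of_gt hc1pos)] using this
  have hSm : Summable Dm := by
    have := hSm'.mul_left γmin⁻¹
    simpa [← mul_assoc, inv_mul_cancel₀ (ne_of_gt hγminpos)] using this
  have htp' : ∑' k, c₁ * Dp k ≤ F 0 - ζ :=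
    Summable.tsum_le_of_sum_range_le hSp' hsum1
  have htm' : ∑' k, γmin * Dm k ≤ F 0 - ζ :=
    Summable.tsum_le_of_sum_range_le hSm' hsum2
  have htp : ∑' k, Dp k ≤ (F 0 - ζ) / c₁ := by
    rw [le_div_iff₀ hc1pos, mul_comm]
    rwa [tsum_mul_left] at htp'
  have htm : ∑' k, Dm k ≤ (F 0 - ζ) / γmin := by
    rw [le_div_iff₀ hγminpos, mul_comm]
    rwa [tsum_mul_left] at htm'
  -- the SC1 quantities
  set s : ℕ → ℝ := fun k => ‖Δ k‖ ^ 2 + |⟪Δ k, x (k + 1) - x k⟫| + δ k with hs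
  have hs0 : ∀ k, 0 ≤ s k := fun k => by
    have := sq_nonneg ‖Δ k‖
    have := abs_nonneg (⟪Δ k, x (k + 1) - x k⟫)
    have := hδpos k
    simp only [hs]; linarith
  have hsle : ∀ k, s k ≤ σ * γmax * Dp k := by
    intro k
    have h := hSC1 k
    have : σ * γ k * Dp k ≤ σ * γmax * Dp k :=
      mul_le_mul_of_nonneg_right (mul_le_mul_of_nonneg_left (hγ k).2 hσ0) (hDp0 k)
    simp only [hs, hDp] at *
    linarith
  have hSs : Summable s :=
    Summable.of_nonneg_of_le hs0 hsle (hSp.mul_left (σ * γmax))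
  have hts : ∑' k, s k ≤ σ * γmax * ∑' k, Dp k := by
    calc ∑' k, s k ≤ ∑' k, σ * γmax * Dp k := Summable.tsum_le_tsum hsle hSs (hSp.mul_left _)
    _ = σ * γmax * ∑' k, Dp k := tsum_mul_left
  -- tendsto facts
  have htDp : Tendsto Dp atTop (𝓝 0) := hSp.tendsto_atTop_zero
  have htDm : Tendsto Dm atTop (𝓝 0) := hSm.tendsto_atTop_zero
  have htss : Tendsto s atTop (𝓝 0) := hSs.tendsto_atTop_zero
  have hΔsq : Tendsto (fun k => ‖Δ k‖ ^ 2) atTop (𝓝 0) := by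
    apply squeeze_zero (fun k => sq_nonneg _) _ htss
    intro k
    have := abs_nonneg (⟪Δ k, x (k + 1) - x k⟫)
    have := hδpos k
    simp only [hs]; linarith
  have hΔn : Tendsto (fun k => ‖Δ k‖) atTop (𝓝 0) := by
    have h := hΔsq.sqrt
    simp only [Real.sqrt_sq (norm_nonneg _), Real.sqrt_zero] at h
    exact h
  have habs : Tendsto (fun k => |⟪Δ k, x (k + 1) - x k⟫|) atTop (𝓝 0) := by
    apply squeeze_zero (fun k => abs_nonneg _) _ htss
    intro k
    have := sq_nonneg ‖Δ k‖
    have := hδpos k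
    simp only [hs]; linarith
  have hδt : Tendsto δ atTop (𝓝 0) := by
    apply squeeze_zero hδpos _ htss
    intro k
    have := sq_nonneg ‖Δ k‖
    have := abs_nonneg (⟪Δ k, x (k + 1) - x k⟫)
    simp only [hs]; linarith
  exact ⟨⟨hSp, htp⟩, ⟨hSm, htm⟩, htDp, htDm, ⟨hSs, hts⟩, hΔn, habs, hδt⟩
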